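/- Fix p, λ₁, λ₂ ∈ ℝ and set A = λ₁p − p²/2 and B = (λ₁² + λ₂²)/2. Suppose R̃ : ℝ × ℝ → ℝ is twice continuously differentiable and satisfies the transport equation ∂_t R̃(t,u) + A·∂_u R̃(t,u) + (A+B)·R̃(t,u) = 0 for all (t,u) ∈ ℝ². Define R(t,x,y,z) = R̃(t, p·y + log x)·exp((λ₁+p)y + λ₂z) for t ∈ ℝ, x > 0, y, z ∈ ℝ. Then R satisfies, on ℝ × (0,∞) × ℝ × ℝ: (i) ∂_t R + (1/2)∂²_{yy}R + (1/2)∂²_{zz}R = (1/2)p²x²·∂²_{xx}R + 2p²x·∂_x R + p²·R; (ii) ∂_y R = p·x·∂_x R + (λ₁+p)·R; (iii) ∂_z R = λ₂·R. -/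

import Mathlib

open Real Set

lemma chainAux {G : ℝ × ℝ → ℝ} (hG : Differentiable ℝ G) (t0 : ℝ) {g : ℝ → ℝ} {g' u0 : ℝ}
    (hg : HasDerivAt g g' u0) :
    HasDerivAt (fun v => G (t0, g v)) (fderiv ℝ G (t0, g u0) (0, 1) * g') u0 := by
  have h1 : HasDerivAt (fun v => ((t0 : ℝ), g v)) (((0 : ℝ), g') : ℝ × ℝ) u0 :=
    (hasDerivAt_const u0 t0).prodMk hg
  have h2 := (hG (t0, g u0)).hasFDerivAt.comp_hasDerivAt u0 h1
  refine HasDerivAt.congr_deriv h2 ?_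
  have h3 : (((0 : ℝ), g') : ℝ × ℝ) = g' • ((0 : ℝ), (1 : ℝ)) := by simp
  rw [h3, map_smul]
  simp [mul_comm]

lemma chainT {G : ℝ × ℝ → ℝ} (hG : Differentiable ℝ G) (u0 t0 : ℝ) :
    HasDerivAt (fun s => G (s, u0)) (fderiv ℝ G (t0, u0) (1, 0)) t0 := by
  have h1 : HasDerivAt (fun s : ℝ => (s, u0)) (((1 : ℝ), (0 : ℝ)) : ℝ × ℝ) t0 :=
    (hasDerivAt_id t0).prodMk (hasDerivAt_const t0 u0)
  exact (hG (t0, u0)).hasFDerivAt.comp_hasDerivAt t0 h1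

/-- If `R̃` is a C² solution of the transport equation
`∂ₜR̃ + A ∂ᵤR̃ + (A+B) R̃ = 0`, then
`R(t,x,y,z) = R̃(t, p y + log x) exp((λ₁+p) y + λ₂ z)` solves the linear
PDE system (i)–(iii) arising from the SPDE for `−∂²ₓₓU` in the
Black–Scholes model. -/
theorem stmt_3 (p l1 l2 A B : ℝ) (hA : A = l1 * p - p ^ 2 / 2)
    (hB : B = (l1 ^ 2 + l2 ^ 2) / 2)
    (Rt : ℝ → ℝ → ℝ)
    (hreg : ContDiff ℝ 2 (fun q : ℝ × ℝ => Rt q.1 q.2))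
    (hpde : ∀ t u : ℝ,
      deriv (fun s => Rt s u) t + A * deriv (fun v => Rt t v) u
        + (A + B) * Rt t u = 0)
    (R : ℝ → ℝ → ℝ → ℝ → ℝ)
    (hR : ∀ (t : ℝ) (x : ℝ) (y z : ℝ),
      R t x y z = Rt t (p * y + Real.log x) * Real.exp ((l1 + p) * y + l2 * z)) :
    ∀ (t : ℝ) (x : ℝ), 0 < x → ∀ (y z : ℝ),
      (deriv (fun s => R s x y z) t
          + (1 / 2) * deriv (deriv (fun y' => R t x y' z)) y
          + (1 / 2) * deriv (deriv (fun z' => R t x y z')) z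
        = (1 / 2) * p ^ 2 * x ^ 2 * deriv (deriv (fun x' => R t x' y z)) x
          + 2 * p ^ 2 * x * deriv (fun x' => R t x' y z) x
          + p ^ 2 * R t x y z) ∧
      (deriv (fun y' => R t x y' z) y
        = p * x * deriv (fun x' => R t x' y z) x + (l1 + p) * R t x y z) ∧
      (deriv (fun z' => R t x y z') z = l2 * R t x y z) := by
  intro t x hx y z
  have hx0 : x ≠ 0 := ne_of_gt hx
  set F : ℝ × ℝ → ℝ := fun q => Rt q.1 q.2 with hFdef
  have hF : ContDiff ℝ 2 F := hreg
  have hFd : Differentiable ℝ F := hF.differentiable (by norm_num)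
  have hF' : ContDiff ℝ 1 (fun q => fderiv ℝ F q) := hF.fderiv_right (by norm_num)
  set f2 : ℝ × ℝ → ℝ := fun q => fderiv ℝ F q (0, 1) with hf2def
  have hf2d : Differentiable ℝ f2 :=
    (hF'.clm_apply contDiff_const).differentiable one_ne_zero
  set u : ℝ := p * y + Real.log x with hu
  set E : ℝ := Real.exp ((l1 + p) * y + l2 * z) with hE
  set D1 : ℝ := fderiv ℝ F (t, u) (1, 0) with hD1
  set D2 : ℝ := f2 (t, u) with hD2
  set D22 : ℝ := fderiv ℝ f2 (t, u) (0, 1) with hD22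
  set f : ℝ := Rt t u with hf
  have hE0 : E = Real.exp ((l1 + p) * y + l2 * z) := hE
  -- rewrite hpde at (t,u)
  have hdt : deriv (fun s => Rt s u) t = D1 := (chainT hFd u t).deriv
  have hdu : deriv (fun v => Rt t v) u = D2 := by
    have := chainAux hFd t (hasDerivAt_id u)
    simpa using this.deriv
  have hpde' : D1 + A * D2 + (A + B) * f = 0 := by
    have := hpde t u; rw [hdt, hdu] at this; exact this
  -- exp-factor derivatives
  have hexpy : ∀ y0 : ℝ, HasDerivAt (fun y' => Real.exp ((l1 + p) * y' + l2 * z))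
      ((l1 + p) * Real.exp ((l1 + p) * y0 + l2 * z)) y0 := by
    intro y0
    have h1 : HasDerivAt (fun y' : ℝ => (l1 + p) * y' + l2 * z) (l1 + p) y0 := by
      simpa using ((hasDerivAt_id y0).const_mul (l1 + p)).add_const (l2 * z)
    simpa [mul_comm] using h1.exp
  have hexpz : ∀ z0 : ℝ, HasDerivAt (fun z' => Real.exp ((l1 + p) * y + l2 * z'))
      (l2 * Real.exp ((l1 + p) * y + l2 * z0)) z0 := by
    intro z0
    have h1 : HasDerivAt (fun z' : ℝ => (l1 + p) * y + l2 * z') l2 z0 := by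
      simpa using ((hasDerivAt_id z0).const_mul l2).const_add ((l1 + p) * y)
    simpa [mul_comm] using h1.exp
  -- z derivative
  have hRz : (fun z' => R t x y z') = fun z' => Rt t u * Real.exp ((l1 + p) * y + l2 * z') :=
    funext fun z' => hR t x y z'
  have hdz : ∀ z0 : ℝ, deriv (fun z' => R t x y z') z0
      = l2 * (Rt t u * Real.exp ((l1 + p) * y + l2 * z0)) := by
    intro z0
    rw [hRz]
    have := (hexpz z0).const_mul (Rt t u)
    rw [this.deriv]; ring
  have hdzz : deriv (deriv (fun z' => R t x y z')) z = l2 ^ 2 * (f * E) := by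
    rw [show deriv (fun z' => R t x y z') = fun z0 => l2 * (Rt t u * Real.exp ((l1 + p) * y + l2 * z0)) from funext hdz]
    have := ((hexpz z).const_mul (Rt t u)).const_mul l2
    rw [this.deriv, hE0, hf]; ring
  -- x derivative
  have hRx : (fun x' => R t x' y z) = fun x' => F (t, p * y + Real.log x') * E :=
    funext fun x' => hR t x' y z
  have hdxAt : ∀ x0 : ℝ, x0 ≠ 0 → HasDerivAt (fun x' => R t x' y z)
      (f2 (t, p * y + Real.log x0) * x0⁻¹ * E) x0 := by
    intro x0 hx0'
    rw [hRx]
    have hlog : HasDerivAt (fun x' => p * y + Real.log x') x0⁻¹ x0 :=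
      (Real.hasDerivAt_log hx0').const_add (p * y)
    exact (chainAux hFd t hlog).mul_const E
  have hdx : deriv (fun x' => R t x' y z) x = D2 * x⁻¹ * E := by
    have := (hdxAt x hx0).deriv; rw [this, hD2, hu]
  -- second x derivative
  have hev : deriv (fun x' => R t x' y z) =ᶠ[nhds x]
      fun x0 => f2 (t, p * y + Real.log x0) * x0⁻¹ * E := by
    filter_upwards [Ioi_mem_nhds hx] with x0 hx0'
    exact (hdxAt x0 (ne_of_gt hx0')).deriv
  have hdxx : deriv (deriv (fun x' => R t x' y z)) x = (D22 - D2) / x ^ 2 * E := by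
    rw [hev.deriv_eq]
    have hlog : HasDerivAt (fun x' => p * y + Real.log x') x⁻¹ x :=
      (Real.hasDerivAt_log hx0).const_add (p * y)
    have h1 : HasDerivAt (fun x0 => f2 (t, p * y + Real.log x0)) (D22 * x⁻¹) x := by
      have := chainAux hf2d t hlog
      simpa [hD22, hu] using this
    have h2 : HasDerivAt (fun x0 : ℝ => x0⁻¹) (-(x ^ 2)⁻¹) x := hasDerivAt_inv hx0
    have h3 : HasDerivAt (fun x0 => f2 (t, p * y + Real.log x0) * x0⁻¹ * E) _ x := (h1.mul h2).mul_const E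
    rw [h3.deriv, hD2, hu]
    field_simp
    ring
  -- t derivative
  have hRt' : (fun s => R s x y z) = fun s => F (s, u) * E :=
    funext fun s => hR s x y z
  have hdt' : deriv (fun s => R s x y z) t = D1 * E := by
    rw [hRt']
    exact ((chainT hFd u t).mul_const E).deriv
  -- y derivative
  have hyAt : ∀ y0 : ℝ, HasDerivAt (fun y' => R t x y' z)
      (f2 (t, p * y0 + Real.log x) * p * Real.exp ((l1 + p) * y0 + l2 * z)
        + F (t, p * y0 + Real.log x) * ((l1 + p) * Real.exp ((l1 + p) * y0 + l2 * z))) y0 := by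
    intro y0
    have hRy : (fun y' => R t x y' z)
        = fun y' => F (t, p * y' + Real.log x) * Real.exp ((l1 + p) * y' + l2 * z) :=
      funext fun y' => hR t x y' z
    rw [hRy]
    have hin : HasDerivAt (fun y' : ℝ => p * y' + Real.log x) p y0 := by
      simpa using ((hasDerivAt_id y0).const_mul p).add_const (Real.log x)
    exact (chainAux hFd t hin).mul (hexpy y0)
  have hdy : deriv (fun y' => R t x y' z) y = D2 * p * E + f * ((l1 + p) * E) := by
    rw [(hyAt y).deriv, hD2, hu, hE0, hf]
  have hdyy : deriv (deriv (fun y' => R t x y' z)) y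
      = D22 * p ^ 2 * E + 2 * p * (l1 + p) * D2 * E + (l1 + p) ^ 2 * f * E := by
    rw [show deriv (fun y' => R t x y' z)
        = fun y0 => f2 (t, p * y0 + Real.log x) * p * Real.exp ((l1 + p) * y0 + l2 * z)
          + F (t, p * y0 + Real.log x) * ((l1 + p) * Real.exp ((l1 + p) * y0 + l2 * z))
      from funext fun y0 => (hyAt y0).deriv]
    have hin : HasDerivAt (fun y' : ℝ => p * y' + Real.log x) p y := by
      simpa using ((hasDerivAt_id y).const_mul p).add_const (Real.log x)
    have h1 : HasDerivAt (fun y0 => f2 (t, p * y0 + Real.log x) * p)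
        (fderiv ℝ f2 (t, u) (0, 1) * p * p) y := by
      have := (chainAux hf2d t hin).mul_const p
      simpa [hu] using this
    have h2 : HasDerivAt (fun y0 => f2 (t, p * y0 + Real.log x) * p * Real.exp ((l1 + p) * y0 + l2 * z) + F (t, p * y0 + Real.log x) * ((l1 + p) * Real.exp ((l1 + p) * y0 + l2 * z))) _ y := (h1.mul (hexpy y)).add
      (((chainAux hFd t hin).mul ((hexpy y).const_mul (l1 + p))))
    rw [h2.deriv, hD22, hD2, hu, hE0, hf]
    show _ = _
    ring
  refine ⟨?_, ?_, ?_⟩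
  · rw [hdt', hdyy, hdzz, hdxx, hdx, hR t x y z, ← hu, ← hE0, ← hf]
    have hx1 : x * x⁻¹ = 1 := mul_inv_cancel₀ hx0
    have hx2 : x ^ 2 * (x ^ 2)⁻¹ = 1 := mul_inv_cancel₀ (pow_ne_zero 2 hx0)
    subst hA hB
    field_simp
    linear_combination (2 * E) * hpde'
  · rw [hdy, hdx, hR t x y z, ← hu, ← hE0, ← hf]
    field_simp
  · rw [hdz, hR t x y z, ← hu, ← hE0, ← hf]
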